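/- arXiv:1102.0937 — 4 statements merged into one kernel-verified Lean document; each statement's English description precedes it below -/
import Mathlib

section
/- Let β > 0 and define f : ℝ → ℝ by f(y) = (1 − y)/((1 − y)² + β·y). Then for every integer m ≥ 1 there exists a constant C > 0 such that |y^{m+1} · f^{(m)}(y)| ≤ C for all y ≥ 0, where f^{(m)} denotes the m-th derivative of f. -/
open Polynomial

lemma poly_bound_aux (P : Polynomial ℝ) (n : ℕ) (h : P.natDegree ≤ n) :
    ∃ M : ℝ, 0 ≤ M ∧ ∀ y : ℝ, 0 ≤ y → |P.eval y| ≤ M * (1+y)^n := by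
  refine ⟨∑ i ∈ Finset.range (n+1), |P.coeff i|,
    Finset.sum_nonneg (fun i _ => abs_nonneg _), ?_⟩
  intro y hy
  have h1 : P.eval y = ∑ i ∈ Finset.range (n+1), P.coeff i * y ^ i :=
    P.eval_eq_sum_range' (Nat.lt_succ_of_le h) y
  rw [h1, Finset.sum_mul]
  refine (Finset.abs_sum_le_sum_abs _ _).trans (Finset.sum_le_sum ?_)
  intro i hi
  rw [abs_mul, abs_pow, abs_of_nonneg hy]
  have hyi : y ^ i ≤ (1+y)^n := by
    calc y ^ i ≤ (1+y)^i := pow_le_pow_left₀ hy (by linarith) i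
    _ ≤ (1+y)^n := pow_le_pow_right₀ (by linarith)
        (Nat.lt_succ_iff.mp (Finset.mem_range.mp hi))
  exact mul_le_mul_of_nonneg_left hyi (abs_nonneg _)

theorem stmt_3 (β : ℝ) (hβ : 0 < β) (f : ℝ → ℝ)
    (hf : ∀ y, f y = (1 - y) / ((1 - y)^2 + β * y)) :
    ∀ m : ℕ, 1 ≤ m → ∃ C : ℝ, 0 < C ∧
      ∀ y : ℝ, 0 ≤ y → |y^(m+1) * iteratedDeriv m f y| ≤ C := by
  intro m _
  set Dp : Polynomial ℝ := X^2 + C (β-2) * X + C 1 with hDpdef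
  have hDe : ∀ y : ℝ, Dp.eval y = (1-y)^2 + β*y := by
    intro y; simp [hDpdef]; ring
  have hDdeg : Dp.natDegree ≤ 2 := by
    rw [hDpdef]; compute_degree
  have hDderiv_deg : (derivative Dp).natDegree ≤ 1 :=
    (Polynomial.natDegree_derivative_le Dp).trans (by omega)
  have hpos : ∀ y : ℝ, -(1/(2*β)) < y → 0 < Dp.eval y := by
    intro y hy
    rw [hDe]
    rcases le_or_gt y 0 with hy0 | hy0
    · have h2 : β * y > β * (-(1/(2*β))) := by
        exact mul_lt_mul_of_pos_left hy hβ
      have h3 : β * (-(1/(2*β))) = -(1/2) := by field_simp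
      nlinarith [sq_nonneg y]
    · nlinarith [sq_nonneg (1-y)]
  have key : ∀ k : ℕ, ∃ P : Polynomial ℝ, P.natDegree ≤ k+1 ∧
      ∀ y : ℝ, -(1/(2*β)) < y → iteratedDeriv k f y = P.eval y / (Dp.eval y)^(k+1) := by
    intro k
    induction k with
    | zero =>
      refine ⟨C 1 - X, ?_, ?_⟩
      · compute_degree
      · intro y hy
        rw [iteratedDeriv_zero, hf y, ← hDe]
        simp
    | succ k ih =>
      obtain ⟨P, hdeg, hP⟩ := ih
      refine ⟨derivative P * Dp - C ((k:ℝ)+1) * (P * derivative Dp), ?_, ?_⟩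
      · refine (Polynomial.natDegree_sub_le _ _).trans ?_
        have h1 : (derivative P * Dp).natDegree ≤ k + 2 := by
          refine (Polynomial.natDegree_mul_le).trans ?_
          have := (Polynomial.natDegree_derivative_le P).trans
            (Nat.sub_le_sub_right hdeg 1)
          omega
        have h2 : (C ((k:ℝ)+1) * (P * derivative Dp)).natDegree ≤ k + 2 := by
          refine (Polynomial.natDegree_C_mul_le _ _).trans ?_
          refine (Polynomial.natDegree_mul_le).trans ?_
          omega
        omega
      · intro y hy
        have hne : Dp.eval y ≠ 0 := ne_of_gt (hpos y hy)
        have hev : iteratedDeriv k f =ᶠ[nhds y]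
            (fun z => P.eval z / (Dp.eval z)^(k+1)) := by
          filter_upwards [Ioi_mem_nhds hy] with z hz using hP z hz
        have hu : HasDerivAt (fun z => P.eval z) (P.derivative.eval y) y :=
          P.hasDerivAt y
        have hv0 : HasDerivAt (fun z => Dp.eval z) (Dp.derivative.eval y) y :=
          Dp.hasDerivAt y
        have hv : HasDerivAt (fun z => (Dp.eval z)^(k+1))
            ((k+1 : ℕ) * (Dp.eval y)^k * Dp.derivative.eval y) y := by
          simpa using hv0.fun_pow (k+1)
        have hq : HasDerivAt (fun z => P.eval z / (Dp.eval z)^(k+1))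
            ((P.derivative.eval y * (Dp.eval y)^(k+1) -
              P.eval y * ((k+1 : ℕ) * (Dp.eval y)^k * Dp.derivative.eval y)) /
              ((Dp.eval y)^(k+1))^2) y :=
          hu.div hv (pow_ne_zero _ hne)
        rw [iteratedDeriv_succ, hev.deriv_eq, hq.deriv]
        rw [Polynomial.eval_sub, Polynomial.eval_mul, Polynomial.eval_mul,
          Polynomial.eval_mul, Polynomial.eval_C]
        push_cast
        field_simp
        ring
  obtain ⟨P, hdeg, hP⟩ := key m
  obtain ⟨M, hM, hMb⟩ := poly_bound_aux P (m+1) hdeg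
  set c : ℝ := min 1 (β/4) with hc
  have hc0 : 0 < c := lt_min one_pos (by linarith)
  have hc1 : c ≤ 1 := min_le_left _ _
  have hc2 : 4 * c ≤ β := by
    have := min_le_right (1:ℝ) (β/4); rw [← hc] at this; linarith
  refine ⟨M / c^(m+1) + 1, by positivity, ?_⟩
  intro y hy
  have hy' : -(1/(2*β)) < y := by
    have : 0 < 1/(2*β) := by positivity
    linarith
  have hDpos : 0 < Dp.eval y := hpos y hy'
  have hy1 : (0:ℝ) < 1 + y := by linarith
  have hDlb : c * (1+y)^2 ≤ Dp.eval y := by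
    rw [hDe]
    nlinarith [mul_nonneg (sub_nonneg.2 hc1) (sq_nonneg (1-y)),
      mul_nonneg (by linarith : (0:ℝ) ≤ β - 4*c) hy]
  rw [hP y hy']
  have habs : |y^(m+1) * (P.eval y / (Dp.eval y)^(m+1))| =
      y^(m+1) * |P.eval y| / (Dp.eval y)^(m+1) := by
    rw [abs_mul, abs_div, abs_of_nonneg (pow_nonneg hy _),
      abs_of_pos (pow_pos hDpos _), mul_div_assoc]
  rw [habs]
  have hnum : y^(m+1) * |P.eval y| ≤ M * ((1+y)^(m+1))^2 := by
    have h1 : y^(m+1) ≤ (1+y)^(m+1) := pow_le_pow_left₀ hy (by linarith) _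
    have h2 : |P.eval y| ≤ M * (1+y)^(m+1) := hMb y hy
    calc y^(m+1) * |P.eval y| ≤ (1+y)^(m+1) * (M * (1+y)^(m+1)) :=
          mul_le_mul h1 h2 (abs_nonneg _) (by positivity)
      _ = M * ((1+y)^(m+1))^2 := by ring
  have hden : c^(m+1) * ((1+y)^(m+1))^2 ≤ (Dp.eval y)^(m+1) := by
    have := pow_le_pow_left₀ (by positivity : (0:ℝ) ≤ c * (1+y)^2) hDlb (m+1)
    calc c^(m+1) * ((1+y)^(m+1))^2 = (c * (1+y)^2)^(m+1) := by
          rw [mul_pow, ← pow_mul, ← pow_mul]; ring_nf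
      _ ≤ (Dp.eval y)^(m+1) := this
  have hfinal : y^(m+1) * |P.eval y| / (Dp.eval y)^(m+1) ≤
      M * ((1+y)^(m+1))^2 / (c^(m+1) * ((1+y)^(m+1))^2) :=
    div_le_div₀ (by positivity) hnum (by positivity) hden
  have heq : M * ((1+y)^(m+1))^2 / (c^(m+1) * ((1+y)^(m+1))^2) = M / c^(m+1) := by
    rw [mul_comm (c^(m+1)) _, ← div_div, mul_div_assoc, div_self (by positivity), mul_one]
  rw [heq] at hfinal
  linarith
end

section
/- Let β > 0 and define f : ℝ → ℝ by f(y) = (1 − y)/((1 − y)² + β·y). Then the map s ↦ s·f(s²) is globally Lipschitz on ℝ: there exists a constant C > 0 such that |s·f(s²) − t·f(t²)| ≤ C·|s − t| for all s, t ∈ ℝ. -/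
theorem stmt_10 (β : ℝ) (hβ : 0 < β) (f : ℝ → ℝ)
    (hf : ∀ y, f y = (1 - y) / ((1 - y)^2 + β * y)) :
    ∃ C : ℝ, 0 < C ∧ ∀ s t : ℝ, |s * f (s^2) - t * f (t^2)| ≤ C * |s - t| := by
  have hC : (0:ℝ) < 3/2 + 3/β := by positivity
  refine ⟨3/2 + 3/β, hC, ?_⟩
  have hD : ∀ s : ℝ, 0 < (1 - s^2)^2 + β * s^2 := by
    intro s
    rcases eq_or_ne s 0 with h | h
    · norm_num [h]
    · have hs : 0 < s^2 := by positivity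
      nlinarith [sq_nonneg (1 - s^2), mul_pos hβ hs]
  set C : ℝ := 3/2 + 3/β with hCdef
  set g' : ℝ → ℝ := fun s =>
    ((1 + s^2) * ((1 - s^2)^2 - β * s^2)) / ((1 - s^2)^2 + β * s^2)^2 with hg'
  have hgeq : (fun x : ℝ => x * f (x^2)) =
      fun x : ℝ => (x - x^3) / ((1 - x^2)^2 + β * x^2) := by
    funext x
    rw [hf]
    ring_nf
  have hderiv : ∀ s : ℝ, HasDerivAt (fun x : ℝ => x * f (x^2)) (g' s) s := by
    intro s
    rw [hgeq]
    have h1 : HasDerivAt (fun x : ℝ => x - x^3) (1 - 3 * s^2) s := by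
      simpa using (hasDerivAt_id s).fun_sub (hasDerivAt_pow 3 s)
    have h2a : HasDerivAt (fun x : ℝ => 1 - x^2) (-(2 * s)) s := by
      simpa using (hasDerivAt_pow 2 s).const_sub 1
    have h2 : HasDerivAt (fun x : ℝ => (1 - x^2)^2 + β * x^2)
        (2 * (1 - s^2) * (-(2 * s)) + β * (2 * s)) s := by
      have := (h2a.fun_pow 2).fun_add ((hasDerivAt_pow 2 s).const_mul β)
      simpa using this
    have h3 := h1.fun_div h2 (ne_of_gt (hD s))
    refine h3.congr_deriv ?_
    rw [hg']
    have hDs := ne_of_gt (hD s)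
    field_simp
    ring
  have hbound : ∀ s : ℝ, ‖g' s‖ ≤ C := by
    intro s
    set u : ℝ := s^2 with hu
    have hu0 : 0 ≤ u := sq_nonneg s
    have hDu : 0 < (1 - u)^2 + β * u := hD s
    rw [Real.norm_eq_abs, hg']
    simp only []
    rw [abs_div, abs_of_pos (by positivity : (0:ℝ) < ((1 - u)^2 + β * u)^2)]
    rw [div_le_iff₀ (by positivity)]
    have hA : |(1 + u) * ((1 - u)^2 - β * u)| ≤ (1 + u) * ((1 - u)^2 + β * u) := by
      rw [abs_mul, abs_of_nonneg (by linarith : (0:ℝ) ≤ 1 + u)]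
      have : |(1 - u)^2 - β * u| ≤ (1 - u)^2 + β * u := by
        rw [abs_le]
        constructor
        · nlinarith [sq_nonneg (1 - u)]
        · nlinarith [mul_nonneg hβ.le hu0]
      nlinarith [abs_nonneg ((1 - u)^2 - β * u)]
    have hkey : (1 + u) ≤ C * ((1 - u)^2 + β * u) := by
      rw [hCdef]
      have h3 : (3/2 + 3/β : ℝ) = (3*β + 6)/(2*β) := by field_simp; ring
      rw [h3, div_mul_eq_mul_div, le_div_iff₀ (by positivity)]
      nlinarith [mul_nonneg hβ.le (sq_nonneg (u - 1/3)), sq_nonneg (1 - u),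
        mul_nonneg (mul_nonneg hβ.le hβ.le) hu0]
    calc |(1 + u) * ((1 - u)^2 - β * u)| ≤ (1 + u) * ((1 - u)^2 + β * u) := hA
      _ ≤ (C * ((1 - u)^2 + β * u)) * ((1 - u)^2 + β * u) := by
          nlinarith [hDu]
      _ = C * ((1 - u)^2 + β * u)^2 := by ring
  intro s t
  have := Convex.norm_image_sub_le_of_norm_hasDerivWithin_le
    (f := fun x : ℝ => x * f (x^2)) (f' := g') (s := Set.univ)
    (fun x _ => (hderiv x).hasDerivWithinAt) (fun x _ => hbound x)
    convex_univ (Set.mem_univ t) (Set.mem_univ s)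
  simpa [Real.norm_eq_abs] using this
end

section
/- Let α ∈ ℝ, β > 0, f(y) = (1 − y)/((1 − y)² + β·y), and define the surface diffusion current J : ℝ² → ℝ² by J(p, q) = (j₁, j₂) with j₁ = α·((p+q)·f((p+q)²) + (p−q)·f((p−q)²)) and j₂ = α·((p+q)·f((p+q)²) − (p−q)·f((p−q)²)). Then J is bounded: there exists a constant C > 0 such that ‖J(p, q)‖ ≤ C for all (p, q) ∈ ℝ². -/
theorem stmt_11 (α β : ℝ) (hβ : 0 < β) (f : ℝ → ℝ)
    (hf : ∀ y, f y = (1 - y) / ((1 - y)^2 + β * y))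
    (J : ℝ → ℝ → EuclideanSpace ℝ (Fin 2))
    (hJ : ∀ p q : ℝ, J p q =
      ![α * ((p + q) * f ((p + q)^2) + (p - q) * f ((p - q)^2)),
        α * ((p + q) * f ((p + q)^2) - (p - q) * f ((p - q)^2))]) :
    ∃ C : ℝ, 0 < C ∧ ∀ p q : ℝ, ‖J p q‖ ≤ C := by
  have hsb : 0 < Real.sqrt β := Real.sqrt_pos.mpr hβ
  set M : ℝ := 1 / (2 * Real.sqrt β) with hM
  have hMpos : 0 < M := by positivity
  have hsq : Real.sqrt β ^ 2 = β := Real.sq_sqrt hβ.le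
  -- key bound : |x * f (x^2)| ≤ M for all x
  have key : ∀ x : ℝ, |x * f (x ^ 2)| ≤ M := by
    intro x
    rw [hf]
    have hD : 0 < (1 - x ^ 2) ^ 2 + β * x ^ 2 := by
      rcases eq_or_ne x 0 with h | h
      · simp [h]
      · have : 0 < x ^ 2 := by positivity
        nlinarith [sq_nonneg (1 - x ^ 2)]
    have habs : |x * (1 - x ^ 2)| * (2 * Real.sqrt β) ≤ (1 - x ^ 2) ^ 2 + β * x ^ 2 := by
      rcases abs_cases (x * (1 - x ^ 2)) with ⟨h, _⟩ | ⟨h, _⟩ <;> rw [h]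
      · nlinarith [sq_nonneg ((1 - x ^ 2) - Real.sqrt β * x)]
      · nlinarith [sq_nonneg ((1 - x ^ 2) + Real.sqrt β * x)]
    rw [show x * ((1 - x ^ 2) / ((1 - x ^ 2) ^ 2 + β * x ^ 2))
        = x * (1 - x ^ 2) / ((1 - x ^ 2) ^ 2 + β * x ^ 2) by ring,
      abs_div, abs_of_pos hD, div_le_iff₀ hD, hM]
    rw [div_mul_eq_mul_div, one_mul, le_div_iff₀ (by positivity)]
    linarith [habs]
  refine ⟨2 * (|α| * (2 * M)) + 1, by positivity, fun p q => ?_⟩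
  set a := α * ((p + q) * f ((p + q)^2) + (p - q) * f ((p - q)^2)) with hadef
  set b := α * ((p + q) * f ((p + q)^2) - (p - q) * f ((p - q)^2)) with hbdef
  have ha : |a| ≤ |α| * (2 * M) := by
    rw [hadef, abs_mul]
    have h1 := key (p + q); have h2 := key (p - q)
    have : |(p + q) * f ((p + q)^2) + (p - q) * f ((p - q)^2)| ≤ 2 * M := by
      calc _ ≤ _ := abs_add_le _ _
        _ ≤ M + M := add_le_add h1 h2
        _ = 2 * M := by ring
    exact mul_le_mul_of_nonneg_left this (abs_nonneg α)
  have hb : |b| ≤ |α| * (2 * M) := by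
    rw [hbdef, abs_mul]
    have h1 := key (p + q); have h2 := key (p - q)
    have : |(p + q) * f ((p + q)^2) - (p - q) * f ((p - q)^2)| ≤ 2 * M := by
      calc _ ≤ _ := abs_sub _ _
        _ ≤ M + M := add_le_add h1 h2
        _ = 2 * M := by ring
    exact mul_le_mul_of_nonneg_left this (abs_nonneg α)
  have hnorm : ‖J p q‖ = Real.sqrt (a ^ 2 + b ^ 2) := by
    rw [EuclideanSpace.norm_eq]
    congr 1
    rw [Fin.sum_univ_two, hJ]
    simp [← hadef, ← hbdef, sq_abs]
  rw [hnorm]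
  have hC : Real.sqrt (a ^ 2 + b ^ 2) ≤ |a| + |b| := by
    rw [show |a| + |b| = Real.sqrt ((|a| + |b|) ^ 2) from
      (Real.sqrt_sq (by positivity)).symm]
    apply Real.sqrt_le_sqrt
    nlinarith [sq_abs a, sq_abs b, mul_nonneg (abs_nonneg a) (abs_nonneg b)]
  calc Real.sqrt (a ^ 2 + b ^ 2) ≤ |a| + |b| := hC
    _ ≤ |α| * (2 * M) + |α| * (2 * M) := add_le_add ha hb
    _ ≤ 2 * (|α| * (2 * M)) + 1 := by nlinarith
end

section
/- Let α ∈ ℝ, β > 0, f(y) = (1 − y)/((1 − y)² + β·y), and define J : ℝ² → ℝ² by J(p, q) = (j₁, j₂) with j₁ = α·((p+q)·f((p+q)²) + (p−q)·f((p−q)²)) and j₂ = α·((p+q)·f((p+q)²) − (p−q)·f((p−q)²)). Then J is globally Lipschitz: there exists a constant C > 0 such that ‖J(ξ₁) − J(ξ₂)‖ ≤ C·‖ξ₁ − ξ₂‖ for all ξ₁, ξ₂ ∈ ℝ². -/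
theorem stmt_12 (α β : ℝ) (hβ : 0 < β) (f : ℝ → ℝ)
    (hf : ∀ y, f y = (1 - y) / ((1 - y)^2 + β * y))
    (J : EuclideanSpace ℝ (Fin 2) → EuclideanSpace ℝ (Fin 2))
    (hJ : ∀ ξ : EuclideanSpace ℝ (Fin 2), J ξ =
      ![α * ((ξ 0 + ξ 1) * f ((ξ 0 + ξ 1)^2) + (ξ 0 - ξ 1) * f ((ξ 0 - ξ 1)^2)),
        α * ((ξ 0 + ξ 1) * f ((ξ 0 + ξ 1)^2) - (ξ 0 - ξ 1) * f ((ξ 0 - ξ 1)^2))]) :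
    ∃ C : ℝ, 0 < C ∧ ∀ ξ₁ ξ₂ : EuclideanSpace ℝ (Fin 2),
      ‖J ξ₁ - J ξ₂‖ ≤ C * ‖ξ₁ - ξ₂‖ := by
  set K : ℝ := 6 + 3/β with hKdef
  have hKpos : 0 < K := by positivity
  set g : ℝ → ℝ := fun x => x * (1 - x^2) / ((1 - x^2)^2 + β * x^2) with hgdef
  have hgf : ∀ x : ℝ, x * f (x^2) = g x := by
    intro x
    rw [hf (x^2), hgdef]
    simp only [mul_div_assoc]
  have hD : ∀ x : ℝ, (0:ℝ) < (1-x^2)^2 + β*x^2 := by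
    intro x
    rcases eq_or_ne x 0 with h|h
    · simp [h]
    · positivity
  set g' : ℝ → ℝ := fun x => (1 + x^2) * ((1 - x^2)^2 - β * x^2) / ((1 - x^2)^2 + β * x^2)^2
    with hg'def
  have hderiv : ∀ x : ℝ, HasDerivAt g (g' x) x := by
    intro x
    have hn : HasDerivAt (fun x : ℝ => x * (1 - x^2)) (1 - 3*x^2) x := by
      have := ((hasDerivAt_id x).mul (((hasDerivAt_pow 2 x)).const_sub 1))
      refine this.congr_deriv ?_; simp only [id_eq, Nat.cast_ofNat]; ring_nf
    have hd : HasDerivAt (fun x : ℝ => (1 - x^2)^2 + β * x^2)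
        (2*(1-x^2)*(-(2*x)) + β*(2*x)) x := by
      have h1 : HasDerivAt (fun x : ℝ => (1 - x^2)^2) (2*(1-x^2)*(-(2*x))) x := by
        have := (((hasDerivAt_pow 2 x)).const_sub 1).pow 2
        refine this.congr_deriv ?_; simp only [id_eq, Nat.cast_ofNat]; ring_nf
      have h2 : HasDerivAt (fun x : ℝ => β * x^2) (β*(2*x)) x := by
        have := (hasDerivAt_pow 2 x).const_mul β
        refine this.congr_deriv ?_; simp only [id_eq, Nat.cast_ofNat]; ring_nf
      exact h1.add h2
    have := hn.div hd (hD x).ne'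
    refine this.congr_deriv ?_
    rw [hg'def]
    field_simp
    ring
  have hbound : ∀ x : ℝ, ‖g' x‖ ≤ K := by
    intro x
    have hDx := hD x
    have habs : |(1-x^2)^2 - β*x^2| ≤ (1-x^2)^2 + β*x^2 := by
      rw [abs_le]
      constructor <;> nlinarith [sq_nonneg (1-x^2), mul_nonneg hβ.le (sq_nonneg x)]
    have hK1 : 1 + x^2 ≤ K * ((1-x^2)^2 + β*x^2) := by
      have h : β * (1 + x^2) ≤ (6*β + 3) * ((1-x^2)^2 + β*x^2) := by
        nlinarith [sq_nonneg (6*x^2 - 5), sq_nonneg (1 - x^2),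
          mul_nonneg hβ.le (sq_nonneg (6*x^2-5)), mul_nonneg hβ.le (sq_nonneg (1-x^2)),
          mul_nonneg (mul_nonneg hβ.le hβ.le) (sq_nonneg x), sq_nonneg x]
      have h2 : K * ((1-x^2)^2 + β*x^2) = ((6*β + 3) * ((1-x^2)^2 + β*x^2))/β := by
        rw [hKdef]; field_simp
      rw [h2, le_div_iff₀ hβ]
      nlinarith [h]
    rw [hg'def]
    simp only [Real.norm_eq_abs]
    rw [abs_div, abs_of_pos (by positivity : (0:ℝ) < ((1-x^2)^2 + β*x^2)^2),
      div_le_iff₀ (by positivity)]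
    calc |(1 + x^2) * ((1 - x^2)^2 - β * x^2)| = (1 + x^2) * |(1-x^2)^2 - β*x^2| := by
          rw [abs_mul, abs_of_pos (by positivity : (0:ℝ) < 1 + x^2)]
      _ ≤ (K * ((1-x^2)^2 + β*x^2)) * ((1-x^2)^2 + β*x^2) := by
          apply mul_le_mul hK1 habs (abs_nonneg _) (by positivity)
      _ = K * ((1-x^2)^2 + β*x^2)^2 := by ring
  have hlip : ∀ s t : ℝ, |g s - g t| ≤ K * |s - t| := by
    intro s t
    have := Convex.norm_image_sub_le_of_norm_hasDerivWithin_le (s := (Set.univ : Set ℝ))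
      (f := g) (f' := g') (C := K)
      (fun x _ => (hderiv x).hasDerivWithinAt) (fun x _ => hbound x) convex_univ
      (Set.mem_univ t) (Set.mem_univ s)
    simpa [Real.norm_eq_abs] using this
  refine ⟨8*(|α|+1)*K, by positivity, ?_⟩
  intro ξ₁ ξ₂
  have hcoord : ∀ (v : EuclideanSpace ℝ (Fin 2)) (i : Fin 2), |v i| ≤ ‖v‖ := by
    intro v i
    rw [EuclideanSpace.norm_eq, ← Real.sqrt_sq_eq_abs]
    apply Real.sqrt_le_sqrt
    rw [Fin.sum_univ_two]
    fin_cases i <;> simp [Real.norm_eq_abs, sq_abs] <;> positivity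
  have hnorm2 : ∀ v : EuclideanSpace ℝ (Fin 2), ‖v‖ ≤ |v 0| + |v 1| := by
    intro v
    rw [EuclideanSpace.norm_eq, Fin.sum_univ_two]
    rw [show (|v 0| + |v 1|) = Real.sqrt ((|v 0| + |v 1|)^2) from
      (Real.sqrt_sq (by positivity)).symm]
    apply Real.sqrt_le_sqrt
    simp only [Real.norm_eq_abs, sq_abs]
    nlinarith [mul_nonneg (abs_nonneg (v 0)) (abs_nonneg (v 1)), sq_abs (v 0), sq_abs (v 1)]
  set a := ξ₁ 0 - ξ₂ 0 with ha
  set b := ξ₁ 1 - ξ₂ 1 with hb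
  have hab : |a| ≤ ‖ξ₁ - ξ₂‖ := by
    have := hcoord (ξ₁ - ξ₂) 0
    simpa [ha] using this
  have hbb : |b| ≤ ‖ξ₁ - ξ₂‖ := by
    have := hcoord (ξ₁ - ξ₂) 1
    simpa [hb] using this
  have hs1 : |g (ξ₁ 0 + ξ₁ 1) - g (ξ₂ 0 + ξ₂ 1)| ≤ K * (|a| + |b|) := by
    calc |g (ξ₁ 0 + ξ₁ 1) - g (ξ₂ 0 + ξ₂ 1)| ≤ K * |(ξ₁ 0 + ξ₁ 1) - (ξ₂ 0 + ξ₂ 1)| :=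
          hlip _ _
      _ ≤ K * (|a| + |b|) := by
          apply mul_le_mul_of_nonneg_left _ hKpos.le
          rw [ha, hb]
          calc |(ξ₁ 0 + ξ₁ 1) - (ξ₂ 0 + ξ₂ 1)| = |(ξ₁ 0 - ξ₂ 0) + (ξ₁ 1 - ξ₂ 1)| := by
                ring_nf
            _ ≤ |ξ₁ 0 - ξ₂ 0| + |ξ₁ 1 - ξ₂ 1| := abs_add_le _ _
  have ht1 : |g (ξ₁ 0 - ξ₁ 1) - g (ξ₂ 0 - ξ₂ 1)| ≤ K * (|a| + |b|) := by
    calc |g (ξ₁ 0 - ξ₁ 1) - g (ξ₂ 0 - ξ₂ 1)| ≤ K * |(ξ₁ 0 - ξ₁ 1) - (ξ₂ 0 - ξ₂ 1)| :=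
          hlip _ _
      _ ≤ K * (|a| + |b|) := by
          apply mul_le_mul_of_nonneg_left _ hKpos.le
          rw [ha, hb]
          calc |(ξ₁ 0 - ξ₁ 1) - (ξ₂ 0 - ξ₂ 1)| = |(ξ₁ 0 - ξ₂ 0) - (ξ₁ 1 - ξ₂ 1)| := by
                ring_nf
            _ ≤ |ξ₁ 0 - ξ₂ 0| + |ξ₁ 1 - ξ₂ 1| := abs_sub _ _
  have habK : K * (|a| + |b|) ≤ 2 * K * ‖ξ₁ - ξ₂‖ := by nlinarith [hab, hbb, hKpos]
  have key0 : |(J ξ₁ - J ξ₂) 0| ≤ 4*(|α|+1)*K*‖ξ₁-ξ₂‖ := by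
    have e1 : (J ξ₁ - J ξ₂) 0 = J ξ₁ 0 - J ξ₂ 0 := rfl
    have e2 : J ξ₁ 0 - J ξ₂ 0 =
        α * ((g (ξ₁ 0 + ξ₁ 1) - g (ξ₂ 0 + ξ₂ 1)) + (g (ξ₁ 0 - ξ₁ 1) - g (ξ₂ 0 - ξ₂ 1))) := by
      rw [hJ ξ₁, hJ ξ₂]
      show α * ((ξ₁ 0 + ξ₁ 1) * f ((ξ₁ 0 + ξ₁ 1)^2) + (ξ₁ 0 - ξ₁ 1) * f ((ξ₁ 0 - ξ₁ 1)^2))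
        - α * ((ξ₂ 0 + ξ₂ 1) * f ((ξ₂ 0 + ξ₂ 1)^2) + (ξ₂ 0 - ξ₂ 1) * f ((ξ₂ 0 - ξ₂ 1)^2)) = _
      rw [hgf, hgf, hgf, hgf]
      ring
    rw [e1, e2]
    calc |α * ((g (ξ₁ 0 + ξ₁ 1) - g (ξ₂ 0 + ξ₂ 1)) + (g (ξ₁ 0 - ξ₁ 1) - g (ξ₂ 0 - ξ₂ 1)))|
        = |α| * |(g (ξ₁ 0 + ξ₁ 1) - g (ξ₂ 0 + ξ₂ 1)) + (g (ξ₁ 0 - ξ₁ 1) - g (ξ₂ 0 - ξ₂ 1))| :=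
          abs_mul _ _
      _ ≤ |α| * (|g (ξ₁ 0 + ξ₁ 1) - g (ξ₂ 0 + ξ₂ 1)| + |g (ξ₁ 0 - ξ₁ 1) - g (ξ₂ 0 - ξ₂ 1)|) :=
          mul_le_mul_of_nonneg_left (abs_add_le _ _) (abs_nonneg α)
      _ ≤ |α| * (2 * K * ‖ξ₁ - ξ₂‖ + 2 * K * ‖ξ₁ - ξ₂‖) := by
          apply mul_le_mul_of_nonneg_left _ (abs_nonneg α)
          exact add_le_add (le_trans hs1 habK) (le_trans ht1 habK)
      _ ≤ 4*(|α|+1)*K*‖ξ₁-ξ₂‖ := by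
          nlinarith [abs_nonneg α, hKpos, norm_nonneg (ξ₁ - ξ₂),
            mul_nonneg hKpos.le (norm_nonneg (ξ₁ - ξ₂))]
  have key1 : |(J ξ₁ - J ξ₂) 1| ≤ 4*(|α|+1)*K*‖ξ₁-ξ₂‖ := by
    have e1 : (J ξ₁ - J ξ₂) 1 = J ξ₁ 1 - J ξ₂ 1 := rfl
    have e2 : J ξ₁ 1 - J ξ₂ 1 =
        α * ((g (ξ₁ 0 + ξ₁ 1) - g (ξ₂ 0 + ξ₂ 1)) - (g (ξ₁ 0 - ξ₁ 1) - g (ξ₂ 0 - ξ₂ 1))) := by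
      rw [hJ ξ₁, hJ ξ₂]
      show α * ((ξ₁ 0 + ξ₁ 1) * f ((ξ₁ 0 + ξ₁ 1)^2) - (ξ₁ 0 - ξ₁ 1) * f ((ξ₁ 0 - ξ₁ 1)^2))
        - α * ((ξ₂ 0 + ξ₂ 1) * f ((ξ₂ 0 + ξ₂ 1)^2) - (ξ₂ 0 - ξ₂ 1) * f ((ξ₂ 0 - ξ₂ 1)^2)) = _
      rw [hgf, hgf, hgf, hgf]
      ring
    rw [e1, e2]
    calc |α * ((g (ξ₁ 0 + ξ₁ 1) - g (ξ₂ 0 + ξ₂ 1)) - (g (ξ₁ 0 - ξ₁ 1) - g (ξ₂ 0 - ξ₂ 1)))|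
        = |α| * |(g (ξ₁ 0 + ξ₁ 1) - g (ξ₂ 0 + ξ₂ 1)) - (g (ξ₁ 0 - ξ₁ 1) - g (ξ₂ 0 - ξ₂ 1))| :=
          abs_mul _ _
      _ ≤ |α| * (|g (ξ₁ 0 + ξ₁ 1) - g (ξ₂ 0 + ξ₂ 1)| + |g (ξ₁ 0 - ξ₁ 1) - g (ξ₂ 0 - ξ₂ 1)|) :=
          mul_le_mul_of_nonneg_left (abs_sub _ _) (abs_nonneg α)
      _ ≤ |α| * (2 * K * ‖ξ₁ - ξ₂‖ + 2 * K * ‖ξ₁ - ξ₂‖) := by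
          apply mul_le_mul_of_nonneg_left _ (abs_nonneg α)
          exact add_le_add (le_trans hs1 habK) (le_trans ht1 habK)
      _ ≤ 4*(|α|+1)*K*‖ξ₁-ξ₂‖ := by
          nlinarith [abs_nonneg α, hKpos, norm_nonneg (ξ₁ - ξ₂),
            mul_nonneg hKpos.le (norm_nonneg (ξ₁ - ξ₂))]
  calc ‖J ξ₁ - J ξ₂‖ ≤ |(J ξ₁ - J ξ₂) 0| + |(J ξ₁ - J ξ₂) 1| := hnorm2 _
    _ ≤ 4*(|α|+1)*K*‖ξ₁-ξ₂‖ + 4*(|α|+1)*K*‖ξ₁-ξ₂‖ := add_le_add key0 key1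
    _ = 8*(|α|+1)*K*‖ξ₁-ξ₂‖ := by ring
end
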